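/- Under the change of variables x = u + wv²/(1+w²), y = v²/(1+w²), φ = arctan(w) (with v > 0, u, w ∈ ℝ), one has n₊(x)·a(√y)·r(φ) = n₊(u)·a(v)·n₋(w) in SL(2,ℝ), and the Jacobian determinant ∂(x,y,φ)/∂(u,v,w) equals 2v/(1+w²)² = 2y²·v^{−3}. -/

import Mathlib

open Matrix

noncomputable def np (u : ℝ) : Matrix (Fin 2) (Fin 2) ℝ := !![1, u; 0, 1]
noncomputable def av (v : ℝ) : Matrix (Fin 2) (Fin 2) ℝ := !![v, 0; 0, 1/v]
noncomputable def nm (w : ℝ) : Matrix (Fin 2) (Fin 2) ℝ := !![1, 0; w, 1]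
noncomputable def rot (φ : ℝ) : Matrix (Fin 2) (Fin 2) ℝ :=
  !![Real.cos φ, -Real.sin φ; Real.sin φ, Real.cos φ]

/-- The change of variables from section coordinates `(u,v,w)` to Iwasawa
coordinates `(x,y,φ)`. -/
noncomputable def iwasawaOfSection : ℝ × ℝ × ℝ → ℝ × ℝ × ℝ :=
  fun p => (p.1 + p.2.2 * p.2.1 ^ 2 / (1 + p.2.2 ^ 2),
            p.2.1 ^ 2 / (1 + p.2.2 ^ 2), Real.arctan p.2.2)

set_option maxHeartbeats 1000000

noncomputable def P1 : ℝ × ℝ × ℝ →L[ℝ] ℝ := ContinuousLinearMap.fst ℝ ℝ (ℝ × ℝ)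
noncomputable def P2 : ℝ × ℝ × ℝ →L[ℝ] ℝ :=
  (ContinuousLinearMap.fst ℝ ℝ ℝ).comp (ContinuousLinearMap.snd ℝ ℝ (ℝ × ℝ))
noncomputable def P3 : ℝ × ℝ × ℝ →L[ℝ] ℝ :=
  (ContinuousLinearMap.snd ℝ ℝ ℝ).comp (ContinuousLinearMap.snd ℝ ℝ (ℝ × ℝ))

@[simp] lemma P1_apply (p : ℝ × ℝ × ℝ) : P1 p = p.1 := rfl
@[simp] lemma P2_apply (p : ℝ × ℝ × ℝ) : P2 p = p.2.1 := rfl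
@[simp] lemma P3_apply (p : ℝ × ℝ × ℝ) : P3 p = p.2.2 := rfl

/-- The total derivative of `iwasawaOfSection` at `(u,v,w)`. -/
noncomputable def iwasawaD (v w : ℝ) : ℝ × ℝ × ℝ →L[ℝ] ℝ × ℝ × ℝ :=
  (P1 + (2*w*v/(1+w^2)) • P2 + (v^2*(1-w^2)/(1+w^2)^2) • P3).prod
    (((2*v/(1+w^2)) • P2 + (-(2*w*v^2)/(1+w^2)^2) • P3).prod
      ((1/(1+w^2)) • P3))

theorem hasFDerivAt_iwasawaOfSection (u v w : ℝ) :
    HasFDerivAt iwasawaOfSection (iwasawaD v w) (u, v, w) := by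
  have h1 : (0:ℝ) < 1 + w^2 := by positivity
  have h1' : (1:ℝ) + w^2 ≠ 0 := h1.ne'
  have hp1 : HasFDerivAt (fun p : ℝ × ℝ × ℝ => p.1) P1 (u,v,w) := hasFDerivAt_fst
  have hp2 : HasFDerivAt (fun p : ℝ × ℝ × ℝ => p.2.1) P2 (u,v,w) :=
    hasFDerivAt_fst.comp _ hasFDerivAt_snd
  have hp3 : HasFDerivAt (fun p : ℝ × ℝ × ℝ => p.2.2) P3 (u,v,w) :=
    hasFDerivAt_snd.comp _ hasFDerivAt_snd
  have hden : HasFDerivAt (fun p : ℝ × ℝ × ℝ => 1 + p.2.2 ^ 2)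
      ((2*w) • P3) (u,v,w) := by
    have h := ((hp3.mul hp3).const_add 1 :)
    have e : (fun p : ℝ × ℝ × ℝ => 1 + p.2.2 * p.2.2) = fun p => 1 + p.2.2 ^ 2 := by
      funext p; ring
    have e2 : (u,v,w).2.2 • P3 + (u,v,w).2.2 • P3 = (2*w) • P3 := by
      refine ContinuousLinearMap.ext fun p => ?_; simp; ring
    rw [e2] at h; rw [← e]; exact h
  have hinv : HasFDerivAt (fun p : ℝ × ℝ × ℝ => (1 + p.2.2 ^ 2)⁻¹)
      ((-(2*w)/(1+w^2)^2) • P3) (u,v,w) := by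
    have h := (hasDerivAt_inv h1').comp_hasFDerivAt_of_eq (u,v,w) hden rfl
    have e : (-(((1:ℝ)+w^2)^2)⁻¹) • ((2*w) • P3) = (-(2*w)/(1+w^2)^2) • P3 := by
      refine ContinuousLinearMap.ext fun p => ?_; simp [smul_smul]
      field_simp
    rw [e] at h
    exact h.congr_of_eventuallyEq (by filter_upwards with p; rfl)
  have hnum2 : HasFDerivAt (fun p : ℝ × ℝ × ℝ => p.2.1 ^ 2)
      ((2*v) • P2) (u,v,w) := by
    have h := (hp2.mul hp2 :)
    have e : (fun p : ℝ × ℝ × ℝ => p.2.1 * p.2.1) = fun p => p.2.1 ^ 2 := by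
      funext p; ring
    have e2 : (u,v,w).2.1 • P2 + (u,v,w).2.1 • P2 = (2*v) • P2 := by
      refine ContinuousLinearMap.ext fun p => ?_; simp; ring
    rw [e2] at h; rw [← e]; exact h
  have hf2 : HasFDerivAt (fun p : ℝ × ℝ × ℝ => p.2.1 ^ 2 / (1 + p.2.2 ^ 2))
      ((2*v/(1+w^2)) • P2 + (-(2*w*v^2)/(1+w^2)^2) • P3) (u,v,w) := by
    have h := (hnum2.mul hinv :)
    have e : (fun p : ℝ × ℝ × ℝ => p.2.1 ^ 2 * (1 + p.2.2 ^ 2)⁻¹)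
        = fun p => p.2.1 ^ 2 / (1 + p.2.2 ^ 2) := by
      funext p; rw [div_eq_mul_inv]
    have e2 : (u,v,w).2.1 ^ 2 • ((-(2*w)/(1+w^2)^2) • P3)
          + ((1:ℝ) + (u,v,w).2.2 ^ 2)⁻¹ • ((2*v) • P2)
        = (2*v/(1+w^2)) • P2 + (-(2*w*v^2)/(1+w^2)^2) • P3 := by
      refine ContinuousLinearMap.ext fun p => ?_; simp; field_simp; ring
    rw [e2] at h; rw [← e]; exact h
  have hnum1 : HasFDerivAt (fun p : ℝ × ℝ × ℝ => p.2.2 * p.2.1 ^ 2)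
      ((2*w*v) • P2 + (v^2) • P3) (u,v,w) := by
    have h := (hp3.mul hnum2 :)
    have e2 : (u,v,w).2.2 • ((2*v) • P2) + ((u,v,w).2.1 ^ 2) • P3
        = (2*w*v) • P2 + (v^2) • P3 := by
      refine ContinuousLinearMap.ext fun p => ?_; simp; ring
    rw [e2] at h; exact h
  have hf1 : HasFDerivAt (fun p : ℝ × ℝ × ℝ => p.1 + p.2.2 * p.2.1 ^ 2 / (1 + p.2.2 ^ 2))
      (P1 + (2*w*v/(1+w^2)) • P2 + (v^2*(1-w^2)/(1+w^2)^2) • P3) (u,v,w) := by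
    have hq := (hnum1.mul hinv :)
    have e : (fun p : ℝ × ℝ × ℝ => p.2.2 * p.2.1 ^ 2 * (1 + p.2.2 ^ 2)⁻¹)
        = fun p => p.2.2 * p.2.1 ^ 2 / (1 + p.2.2 ^ 2) := by
      funext p; rw [div_eq_mul_inv]
    rw [show ((fun p : ℝ × ℝ × ℝ => p.2.2 * p.2.1 ^ 2) * fun p => (1 + p.2.2 ^ 2)⁻¹) = fun p => p.2.2 * p.2.1 ^ 2 / (1 + p.2.2 ^ 2) from e] at hq
    have h := (hp1.add hq :)
    have e2 : P1 + (((u,v,w).2.2 * (u,v,w).2.1 ^ 2) • ((-(2*w)/(1+w^2)^2) • P3)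
          + ((1:ℝ) + (u,v,w).2.2 ^ 2)⁻¹ • ((2*w*v) • P2 + (v^2) • P3))
        = P1 + (2*w*v/(1+w^2)) • P2 + (v^2*(1-w^2)/(1+w^2)^2) • P3 := by
      refine ContinuousLinearMap.ext fun p => ?_
      simp only [ContinuousLinearMap.add_apply, ContinuousLinearMap.smul_apply,
        smul_eq_mul, P1_apply, P2_apply, P3_apply]
      field_simp
      ring
    rw [e2] at h; exact h
  have hf3 : HasFDerivAt (fun p : ℝ × ℝ × ℝ => Real.arctan p.2.2)
      ((1/(1+w^2)) • P3) (u,v,w) := by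
    have h := (Real.hasDerivAt_arctan w).comp_hasFDerivAt (u,v,w) hp3; exact h
  exact HasFDerivAt.prodMk hf1 (HasFDerivAt.prodMk hf2 hf3)

noncomputable def eqv : (Fin 3 → ℝ) ≃ₗ[ℝ] ℝ × ℝ × ℝ where
  toFun f := (f 0, f 1, f 2)
  invFun p := ![p.1, p.2.1, p.2.2]
  map_add' f g := rfl
  map_smul' c f := rfl
  left_inv f := by funext i; fin_cases i <;> rfl
  right_inv p := rfl

lemma eqv_apply (f : Fin 3 → ℝ) : eqv f = (f 0, f 1, f 2) := rfl
lemma eqv_symm_apply (p : ℝ × ℝ × ℝ) : eqv.symm p = ![p.1, p.2.1, p.2.2] := rfl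

noncomputable def B3 : Module.Basis (Fin 3) ℝ (ℝ × ℝ × ℝ) := (Pi.basisFun ℝ (Fin 3)).map eqv

theorem det_iwasawaD (v w : ℝ) :
    LinearMap.det ((iwasawaD v w).toLinearMap) = 2 * v / (1 + w ^ 2) ^ 2 := by
  rw [← LinearMap.det_toMatrix B3]
  have hM : LinearMap.toMatrix B3 B3 (iwasawaD v w).toLinearMap =
      !![1, 2*w*v/(1+w^2), v^2*(1-w^2)/(1+w^2)^2;
         0, 2*v/(1+w^2), -(2*w*v^2)/(1+w^2)^2;
         0, 0, 1/(1+w^2)] := by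
    ext i j
    rw [LinearMap.toMatrix_apply]
    fin_cases i <;> fin_cases j <;>
      simp [B3, eqv_apply, eqv_symm_apply, iwasawaD, Pi.basisFun_apply, Matrix.vecHead, Matrix.vecTail]
  rw [hM, Matrix.det_fin_three]
  simp [Matrix.vecHead, Matrix.vecTail]
  field_simp

/-- Under `x = u + wv²/(1+w²)`, `y = v²/(1+w²)`, `φ = arctan w`, one has
`n₊(x)a(√y)r(φ) = n₊(u)a(v)n₋(w)`, and the Jacobian determinant equals
`2v/(1+w²)² = 2y²v^{−3}`. -/
theorem iwasawa_section_change_of_variables (u v w : ℝ) (hv : 0 < v) :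
    (np (u + w * v ^ 2 / (1 + w ^ 2))
        * av (Real.sqrt (v ^ 2 / (1 + w ^ 2))) * rot (Real.arctan w)
      = np u * av v * nm w)
    ∧ LinearMap.det ((fderiv ℝ iwasawaOfSection (u, v, w)).toLinearMap)
        = 2 * v / (1 + w ^ 2) ^ 2
    ∧ 2 * v / (1 + w ^ 2) ^ 2 = 2 * (v ^ 2 / (1 + w ^ 2)) ^ 2 * v ^ (-3 : ℤ) := by
  refine ⟨?_, ?_, ?_⟩
  · have h1 : (0:ℝ) < 1 + w^2 := by positivity
    have hs : (0:ℝ) < Real.sqrt (1 + w^2) := Real.sqrt_pos.2 h1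
    have hsq : Real.sqrt (1 + w^2) ^ 2 = 1 + w^2 := Real.sq_sqrt h1.le
    have hy : Real.sqrt (v ^ 2 / (1 + w ^ 2)) = v / Real.sqrt (1 + w^2) := by
      rw [Real.sqrt_div (by positivity), Real.sqrt_sq hv.le]
    rw [hy]
    ext i j
    fin_cases i <;> fin_cases j <;>
      simp [np, av, nm, rot, Matrix.mul_apply, Fin.sum_univ_two,
        Real.cos_arctan, Real.sin_arctan] <;>
      field_simp <;>
      nlinarith [hsq, hs, hv, h1, congrArg (· * (v^2*w)) hsq]
  · rw [(hasFDerivAt_iwasawaOfSection u v w).fderiv]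
    exact det_iwasawaD v w
  · have h1 : (1:ℝ) + w^2 ≠ 0 := by positivity
    have h2 : v ≠ 0 := hv.ne'
    rw [show ((-3:ℤ)) = -(3:ℕ) by norm_num, _root_.zpow_neg, zpow_natCast]
    field_simp
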